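/- The hoisting rewrite relation is locally confluent, and hence (being terminating) confluent, so the normal form under hoisting is unique. -/
import Mathlib


/-!
Statement 10: The hoisting rewrite relation is locally confluent, and hence
(being terminating) confluent, so the normal form under hoisting is unique.
-/

namespace CostLabelling

abbrev Var := ℕ
abbrev Label := ℕ

inductive Tm : Type where
  | var : Var → Tm
  | lam : List Var → Tm → Tm
  | app : Tm → List Tm → Tm
  | tup : List Tm → Tm
  | proj : ℕ → Tm → Tm
  | letin : Var → Tm → Tm → Tm
  | pre : Label → Tm → Tm
  | post : Tm → Label → Tm

inductive IsValue : Tm → Prop where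
  | var : ∀ x, IsValue (.var x)
  | lam : ∀ xs M, IsValue (.lam xs M)
  | tup : ∀ Vs, (∀ V ∈ Vs, IsValue V) → IsValue (.tup Vs)

mutual
def subst (V : Tm) (x : Var) : Tm → Tm
  | .var y => if y = x then V else .var y
  | .lam xs M => if x ∈ xs then .lam xs M else .lam xs (subst V x M)
  | .app M Ns => .app (subst V x M) (substList V x Ns)
  | .tup Ms => .tup (substList V x Ms)
  | .proj i M => .proj i (subst V x M)
  | .letin y M N => .letin y (subst V x M) (if y = x then N else subst V x N)
  | .pre l M => .pre l (subst V x M)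
  | .post M l => .post (subst V x M) l
def substList (V : Tm) (x : Var) : List Tm → List Tm
  | [] => []
  | M :: Ms => subst V x M :: substList V x Ms
end

mutual
def fv : Tm → List Var
  | .var x => [x]
  | .lam xs M => (fv M).filter (fun y => y ∉ xs)
  | .app M Ns => fv M ++ fvList Ns
  | .tup Ms => fvList Ms
  | .proj _ M => fv M
  | .letin y M N => fv M ++ (fv N).filter (fun z => z ≠ y)
  | .pre _ M => fv M
  | .post M _ => fv M
def fvList : List Tm → List Var
  | [] => []
  | M :: Ms => fv M ++ fvList Ms
end

/-- `C` is not a function. -/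
def NonFun (C : Tm) : Prop := ∀ ys B, C ≠ .lam ys B

/-- Restricted (simple) terms `T ::= @(x,x⁺) | let x = C in T | ℓ > T` with
`C ::= (x*) | πᵢ(x)` : terms containing no function definitions. -/
inductive Simple : Tm → Prop where
  | app : ∀ (x : Var) (ys : List Var), Simple (.app (.var x) (ys.map .var))
  | letTup : ∀ x (ys : List Var) T, Simple T →
      Simple (.letin x (.tup (ys.map .var)) T)
  | letProj : ∀ x i (y : Var) T, Simple T →
      Simple (.letin x (.proj i (.var y)) T)
  | pre : ∀ l T, Simple T → Simple (.pre l T)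

/-- Hoisting contexts
`D ::= [] | let x = C in D | let x = λy⁺.D in M | ℓ > D`. -/
inductive HCtx : Type where
  | hole : HCtx
  | letC : Var → Tm → HCtx → HCtx
  | letLam : Var → List Var → HCtx → Tm → HCtx
  | pre : Label → HCtx → HCtx

def hplug : HCtx → Tm → Tm
  | .hole, M => M
  | .letC x C D, M => .letin x C (hplug D M)
  | .letLam x ys D N, M => .letin x (.lam ys (hplug D M)) N
  | .pre l D, M => .pre l (hplug D M)

/-- The hoisting transformations `(h₁)`, `(h₂)`, `(h₃)`, applied under a
hoisting context `D`. -/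
inductive Hoist : Tm → Tm → Prop where
  | h1 : ∀ D x C y (zs : List Var) T M, Simple T → NonFun C →
      x ∉ fv (.lam zs T) →
      Hoist (hplug D (.letin x C (.letin y (.lam zs T) M)))
            (hplug D (.letin y (.lam zs T) (.letin x C M)))
  | h2 : ∀ D x (ws : List Var) y (zs : List Var) T M N, Simple T →
      (∀ w ∈ ws, w ∉ fv (.lam zs T)) →
      Hoist (hplug D (.letin x (.lam ws (.letin y (.lam zs T) M)) N))
            (hplug D (.letin y (.lam zs T) (.letin x (.lam ws M) N)))
  | h3 : ∀ D l y (zs : List Var) T M, Simple T →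
      Hoist (hplug D (.pre l (.letin y (.lam zs T) M)))
            (hplug D (.letin y (.lam zs T) (.pre l M)))

/-- Zero or more hoisting steps. -/
abbrev HoistStar : Tm → Tm → Prop := Relation.ReflTransGen Hoist

/-- `N` is a hoisting normal form of `M`. -/
def HoistNF (M N : Tm) : Prop := HoistStar M N ∧ ∀ P, ¬ Hoist N P


/-! ### Auxiliary development for the confluence proof -/

/-- Single-step hoisting defined by congruence rules instead of contexts. -/
inductive Step : Tm → Tm → Prop where
  | h1 : ∀ x C y (zs : List Var) T M, Simple T → NonFun C →
      x ∉ fv (.lam zs T) →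
      Step (.letin x C (.letin y (.lam zs T) M))
           (.letin y (.lam zs T) (.letin x C M))
  | h2 : ∀ x (ws : List Var) y (zs : List Var) T M N, Simple T →
      (∀ w ∈ ws, w ∉ fv (.lam zs T)) →
      Step (.letin x (.lam ws (.letin y (.lam zs T) M)) N)
           (.letin y (.lam zs T) (.letin x (.lam ws M) N))
  | h3 : ∀ l y (zs : List Var) T M, Simple T →
      Step (.pre l (.letin y (.lam zs T) M))
           (.letin y (.lam zs T) (.pre l M))
  | letR : ∀ x C {N N'}, Step N N' → Step (.letin x C N) (.letin x C N')
  | letLam : ∀ x ys {B B'} N, Step B B' → Step (.letin x (.lam ys B) N) (.letin x (.lam ys B') N)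
  | pre : ∀ l {M M'}, Step M M' → Step (.pre l M) (.pre l M')

/-- Composition of hoisting contexts. -/
def hcomp : HCtx → HCtx → HCtx
  | .hole, D => D
  | .letC x C D₁, D => .letC x C (hcomp D₁ D)
  | .letLam x ys D₁ N, D => .letLam x ys (hcomp D₁ D) N
  | .pre l D₁, D => .pre l (hcomp D₁ D)

theorem hplug_hcomp (D₁ D₂ : HCtx) (M : Tm) :
    hplug (hcomp D₁ D₂) M = hplug D₁ (hplug D₂ M) := by
  induction D₁ <;> simp [hcomp, hplug, *]

theorem Hoist.hplug {M N : Tm} (h : Hoist M N) (D : HCtx) :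
    Hoist (hplug D M) (hplug D N) := by
  cases h with
  | h1 D₀ x C y zs T M hT hC hx =>
      rw [← hplug_hcomp, ← hplug_hcomp]; exact Hoist.h1 _ _ _ _ _ _ _ hT hC hx
  | h2 D₀ x ws y zs T M N hT hw =>
      rw [← hplug_hcomp, ← hplug_hcomp]; exact Hoist.h2 _ _ _ _ _ _ _ _ hT hw
  | h3 D₀ l y zs T M hT =>
      rw [← hplug_hcomp, ← hplug_hcomp]; exact Hoist.h3 _ _ _ _ _ _ hT

theorem Step.toHoist {M N : Tm} (h : Step M N) : Hoist M N := by
  induction h with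
  | h1 x C y zs T M hT hC hx => exact Hoist.h1 .hole _ _ _ _ _ _ hT hC hx
  | h2 x ws y zs T M N hT hw => exact Hoist.h2 .hole _ _ _ _ _ _ _ hT hw
  | h3 l y zs T M hT => exact Hoist.h3 .hole _ _ _ _ _ hT
  | letR x C _ ih => exact ih.hplug (.letC x C .hole)
  | letLam x ys N _ ih => exact ih.hplug (.letLam x ys .hole N)
  | pre l _ ih => exact ih.hplug (.pre l .hole)

theorem Step.hplug {M N : Tm} (h : Step M N) (D : HCtx) :
    Step (hplug D M) (hplug D N) := by
  induction D with
  | hole => exact h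
  | letC x C D ih => exact Step.letR x C ih
  | letLam x ys D N ih => exact Step.letLam x ys N ih
  | pre l D ih => exact Step.pre l ih

theorem Hoist.toStep {M N : Tm} (h : Hoist M N) : Step M N := by
  cases h with
  | h1 D x C y zs T M hT hC hx => exact (Step.h1 _ _ _ _ _ _ hT hC hx).hplug D
  | h2 D x ws y zs T M N hT hw => exact (Step.h2 _ _ _ _ _ _ _ hT hw).hplug D
  | h3 D l y zs T M hT => exact (Step.h3 _ _ _ _ _ hT).hplug D

theorem hoist_eq_step : Hoist = Step := by
  funext M N; exact propext ⟨Hoist.toStep, Step.toHoist⟩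

/-- A simple term is never of the form `let y = λzs.S in M`. -/
theorem Simple.ne_letlam {T : Tm} (h : Simple T) :
    ∀ y zs S M, T ≠ .letin y (.lam zs S) M := by
  cases h <;> intro y zs S M hEq <;> simp_all

/-- Simple terms admit no hoisting step. -/
theorem Simple.no_step {T : Tm} (h : Simple T) : ∀ P, ¬ Step T P := by
  induction h with
  | app x ys => intro P hs; cases hs
  | letTup x ys T hT ih =>
      intro P hs
      cases hs with
      | h1 x' C y zs S M hS hC hx => exact hT.ne_letlam _ _ _ _ rfl
      | letR _ _ hs' => exact ih _ hs'
  | letProj x i y T hT ih =>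
      intro P hs
      cases hs with
      | h1 x' C y' zs S M hS hC hx => exact hT.ne_letlam _ _ _ _ rfl
      | letR _ _ hs' => exact ih _ hs'
  | pre l T hT ih =>
      intro P hs
      cases hs with
      | h3 _ _ _ _ _ hS => exact hT.ne_letlam _ _ _ _ rfl
      | pre _ hs' => exact ih _ hs'

open Relation in
theorem reflGen_letR {N N' : Tm} (x C) (h : ReflGen Step N N') :
    ReflGen Step (.letin x C N) (.letin x C N') := by
  cases h with
  | refl => exact .refl
  | single h => exact .single (.letR x C h)

open Relation in
theorem reflGen_letLam {B B' : Tm} (x ys N) (h : ReflGen Step B B') :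
    ReflGen Step (.letin x (.lam ys B) N) (.letin x (.lam ys B') N) := by
  cases h with
  | refl => exact .refl
  | single h => exact .single (.letLam x ys N h)

open Relation in
theorem reflGen_pre {M M' : Tm} (l) (h : ReflGen Step M M') :
    ReflGen Step (.pre l M) (.pre l M') := by
  cases h with
  | refl => exact .refl
  | single h => exact .single (.pre l h)

open Relation in
/-- The diamond property up to reflexivity for single hoisting steps. -/
theorem step_diamond : ∀ {a b c : Tm}, Step a b → Step a c →
    ∃ d, ReflGen Step b d ∧ ReflGen Step c d := by
  intro a b c h₁ h₂
  induction h₁ generalizing c with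
  | h1 x C y zs T M hT hC hx =>
      cases h₂ with
      | h1 => exact ⟨_, .refl, .refl⟩
      | h2 => exact absurd rfl (hC _ _)
      | letR _ _ hs =>
          cases hs with
          | h1 _ _ _ _ _ _ _ hC' _ => exact absurd rfl (hC' _ _)
          | h2 _ _ _ _ _ _ _ hS _ => exact absurd rfl (hT.ne_letlam _ _ _ _)
          | letR _ _ hM =>
              exact ⟨_, .single (.letR _ _ (.letR _ _ hM)),
                .single (.h1 _ _ _ _ _ _ hT hC hx)⟩
          | letLam _ _ _ hTstep => exact absurd hTstep (hT.no_step _)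
      | letLam => exact absurd rfl (hC _ _)
  | h2 x ws y zs T M N hT hw =>
      cases h₂ with
      | h1 _ _ _ _ _ _ _ hC _ => exact absurd rfl (hC _ _)
      | h2 => exact ⟨_, .refl, .refl⟩
      | letR _ _ hN =>
          exact ⟨_, .single (.letR _ _ (.letR _ _ hN)),
            .single (.h2 _ _ _ _ _ _ _ hT hw)⟩
      | letLam _ _ _ hs =>
          cases hs with
          | h1 _ _ _ _ _ _ _ hC' _ => exact absurd rfl (hC' _ _)
          | h2 _ _ _ _ _ _ _ hS _ => exact absurd rfl (hT.ne_letlam _ _ _ _)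
          | letR _ _ hM =>
              exact ⟨_, .single (.letR _ _ (.letLam _ _ _ hM)),
                .single (.h2 _ _ _ _ _ _ _ hT hw)⟩
          | letLam _ _ _ hTstep => exact absurd hTstep (hT.no_step _)
  | h3 l y zs T M hT =>
      cases h₂ with
      | h3 => exact ⟨_, .refl, .refl⟩
      | pre _ hs =>
          cases hs with
          | h1 _ _ _ _ _ _ _ hC' _ => exact absurd rfl (hC' _ _)
          | h2 _ _ _ _ _ _ _ hS _ => exact absurd rfl (hT.ne_letlam _ _ _ _)
          | letR _ _ hM =>
              exact ⟨_, .single (.letR _ _ (.pre _ hM)),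
                .single (.h3 _ _ _ _ _ hT)⟩
          | letLam _ _ _ hTstep => exact absurd hTstep (hT.no_step _)
  | letR x C hN ih =>
      cases h₂ with
      | h1 _ _ _ _ _ _ hT hC hx =>
          cases hN with
          | h1 _ _ _ _ _ _ _ hC' _ => exact absurd rfl (hC' _ _)
          | h2 _ _ _ _ _ _ _ hS _ => exact absurd rfl (hT.ne_letlam _ _ _ _)
          | letR _ _ hM =>
              exact ⟨_, .single (.h1 _ _ _ _ _ _ hT hC hx),
                .single (.letR _ _ (.letR _ _ hM))⟩
          | letLam _ _ _ hTstep => exact absurd hTstep (hT.no_step _)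
      | h2 _ _ _ _ _ _ _ hT hw =>
          exact ⟨_, .single (.h2 _ _ _ _ _ _ _ hT hw),
            .single (.letR _ _ (.letR _ _ hN))⟩
      | letR _ _ hN' =>
          obtain ⟨d, hd₁, hd₂⟩ := ih hN'
          exact ⟨_, reflGen_letR x C hd₁, reflGen_letR x C hd₂⟩
      | letLam _ _ _ hB =>
          exact ⟨_, .single (.letLam _ _ _ hB), .single (.letR _ _ hN)⟩
  | letLam x ys N hB ih =>
      cases h₂ with
      | h1 _ _ _ _ _ _ _ hC _ => exact absurd rfl (hC _ _)
      | h2 _ _ _ _ _ _ _ hT hw =>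
          cases hB with
          | h1 _ _ _ _ _ _ _ hC' _ => exact absurd rfl (hC' _ _)
          | h2 _ _ _ _ _ _ _ hS _ => exact absurd rfl (hT.ne_letlam _ _ _ _)
          | letR _ _ hM =>
              exact ⟨_, .single (.h2 _ _ _ _ _ _ _ hT hw),
                .single (.letR _ _ (.letLam _ _ _ hM))⟩
          | letLam _ _ _ hTstep => exact absurd hTstep (hT.no_step _)
      | letR _ _ hN' =>
          exact ⟨_, .single (.letR _ _ hN'), .single (.letLam _ _ _ hB)⟩
      | letLam _ _ _ hB' =>
          obtain ⟨d, hd₁, hd₂⟩ := ih hB'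
          exact ⟨_, reflGen_letLam x ys N hd₁, reflGen_letLam x ys N hd₂⟩
  | pre l hM ih =>
      cases h₂ with
      | h3 _ _ _ _ _ hT =>
          cases hM with
          | h1 _ _ _ _ _ _ _ hC' _ => exact absurd rfl (hC' _ _)
          | h2 _ _ _ _ _ _ _ hS _ => exact absurd rfl (hT.ne_letlam _ _ _ _)
          | letR _ _ hM' =>
              exact ⟨_, .single (.h3 _ _ _ _ _ hT),
                .single (.letR _ _ (.pre _ hM'))⟩
          | letLam _ _ _ hTstep => exact absurd hTstep (hT.no_step _)
      | pre _ hM' =>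
          obtain ⟨d, hd₁, hd₂⟩ := ih hM'
          exact ⟨_, reflGen_pre l hd₁, reflGen_pre l hd₂⟩

open Relation in
theorem step_confluent {M N₁ N₂ : Tm} (h₁ : ReflTransGen Step M N₁)
    (h₂ : ReflTransGen Step M N₂) :
    ∃ P, ReflTransGen Step N₁ P ∧ ReflTransGen Step N₂ P := by
  have h := Relation.church_rosser (r := Step)
    (fun a b c hab hac => by
      obtain ⟨d, hd₁, hd₂⟩ := step_diamond hab hac
      exact ⟨d, hd₁, hd₂.to_reflTransGen⟩) h₁ h₂
  obtain ⟨P, hP₁, hP₂⟩ := h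
  exact ⟨P, hP₁, hP₂⟩

/-- The hoisting relation is locally confluent, hence
confluent, and normal forms are unique. -/
theorem hoisting_confluent :
    (∀ M N₁ N₂, Hoist M N₁ → Hoist M N₂ →
      ∃ P, HoistStar N₁ P ∧ HoistStar N₂ P) ∧
    (∀ M N₁ N₂, HoistStar M N₁ → HoistStar M N₂ →
      ∃ P, HoistStar N₁ P ∧ HoistStar N₂ P) ∧
    (∀ M N₁ N₂, HoistNF M N₁ → HoistNF M N₂ → N₁ = N₂) := by
  have key : ∀ M N₁ N₂, HoistStar M N₁ → HoistStar M N₂ →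
      ∃ P, HoistStar N₁ P ∧ HoistStar N₂ P := by
    intro M N₁ N₂ h₁ h₂
    have e : HoistStar = Relation.ReflTransGen Step := by
      unfold HoistStar; rw [hoist_eq_step]
    rw [e] at h₁ h₂ ⊢
    exact step_confluent h₁ h₂
  refine ⟨?_, key, ?_⟩
  · intro M N₁ N₂ h₁ h₂
    exact key M N₁ N₂ (Relation.ReflTransGen.single h₁) (Relation.ReflTransGen.single h₂)
  · intro M N₁ N₂ hN₁ hN₂
    obtain ⟨P, hP₁, hP₂⟩ := key M N₁ N₂ hN₁.1 hN₂.1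
    have e₁ : N₁ = P := by
      cases hP₁.cases_head with
      | inl h => exact h
      | inr h => exact absurd h.choose_spec.1 (hN₁.2 _)
    have e₂ : N₂ = P := by
      cases hP₂.cases_head with
      | inl h => exact h
      | inr h => exact absurd h.choose_spec.1 (hN₂.2 _)
    rw [e₁, e₂]


end CostLabelling
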